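/- Let y ∈ ℝ, y ≠ 0, and w ∈ ℂ with w² = y. For s > 0 set W₁ = φ2(−√s), W₂ = W₁·φ3(−√s), W₃ = W₂·φ2(√s), W₄ = W₃·φ3(√s), and let R(s) = Ω_y(W₁, φ3(−√s)) + Ω_y(W₂, φ2(√s)) + Ω_y(W₃, φ3(√s)). Then (1/s)·R(s) tends to 2 as s → 0 along positive real values. (This is the computation showing the central component of [J2,J3] in the extension is 2J0.) -/

import Mathlib

open Complex Matrix Filter

noncomputable section

abbrev M2 : Type := Matrix (Fin 2) (Fin 2) ℂ

/-- `φ2(t) = !![cos(wt), w⁻¹ sin(wt); −w sin(wt), cos(wt)]`. -/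
def phi2 (w : ℂ) (t : ℝ) : M2 :=
  !![Complex.cos (w * t), w⁻¹ * Complex.sin (w * t);
     -w * Complex.sin (w * t), Complex.cos (w * t)]

/-- `φ3(t) = !![cos(wt), i w⁻¹ sin(wt); i w sin(wt), cos(wt)]`. -/
def phi3 (w : ℂ) (t : ℝ) : M2 :=
  !![Complex.cos (w * t), Complex.I * w⁻¹ * Complex.sin (w * t);
     Complex.I * w * Complex.sin (w * t), Complex.cos (w * t)]

/-- `Ω_y(g,h) = (1/y)·Arg(a(gh)/(a(g)a(h)))`. -/
def Omega (y : ℝ) (g h : M2) : ℝ :=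
  (1 / y) * Complex.arg ((g * h) 0 0 / (g 0 0 * h 0 0))

def FF (x : ℝ) : ℝ := if x = 0 then 1 else Real.arctan x / x

lemma FF_mul (x : ℝ) : FF x * x = Real.arctan x := by
  by_cases h : x = 0
  · simp [FF, h]
  · simp [FF, h, div_mul_cancel₀]

lemma aux_arg_div (a b c d : ℝ) (hd : c^2 + d^2 ≠ 0) (hpos : 0 < a*c + b*d) :
    Complex.arg (((a:ℂ) + b*I) / ((c:ℂ) + d*I)) =
      Real.arctan ((b*c - a*d) / (a*c + b*d)) := by
  set z := (((a:ℂ) + b*I) / ((c:ℂ) + d*I)) with hz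
  have hq : (0:ℝ) < c^2 + d^2 := lt_of_le_of_ne (by positivity) (Ne.symm hd)
  have hre : z.re = (a*c + b*d)/(c^2+d^2) := by
    simp [hz, Complex.div_re, Complex.normSq_apply]; ring
  have him : z.im = (b*c - a*d)/(c^2+d^2) := by
    simp [hz, Complex.div_im, Complex.normSq_apply]; ring
  have hrepos : 0 < z.re := by rw [hre]; positivity
  have habs : |Complex.arg z| < Real.pi/2 :=
    Complex.abs_arg_lt_pi_div_two_iff.2 (Or.inl hrepos)
  have h1 : (b*c - a*d) / (a*c + b*d) = z.im / z.re := by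
    rw [hre, him, div_div_div_cancel_right₀ hd]
  rw [h1, ← Complex.tan_arg,
    Real.arctan_tan (by linarith [abs_lt.1 habs]) (by linarith [abs_lt.1 habs])]

set_option maxHeartbeats 1000000 in
lemma aux_main (y s : ℝ) (hy : y ≠ 0) (hs : s ≠ 0) (w : ℂ) (hw0 : w ≠ 0) (t : ℝ)
    (a b : ℝ) (hcu : Complex.cos (w*t)^2 = (b:ℂ)) (hsu : Complex.sin (w*t)^2 = (a:ℂ))
    (hv0 : 0 < b) (hp2 : 0 < (b+a)*b + 2*a*a)
    (hp3 : 0 < (b^2+2*a*b-a^2)*(b^2+a*b) + 2*a*b*(2*a*b))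
    (hq3 : 0 < (b^2+a*b)^2 + (2*a*b)^2) :
    FF ((a*b - b*0)/(b*b + a*0)) * ((a*b - b*0)/(b*b + a*0) / (y*s))
      + FF ((2*a*b - (b+a)*a)/((b+a)*b + 2*a*a))
          * ((2*a*b - (b+a)*a)/((b+a)*b + 2*a*a) / (y*s))
      + FF ((2*a*b*(b^2+a*b) - (b^2+2*a*b-a^2)*(2*a*b))
              /((b^2+2*a*b-a^2)*(b^2+a*b) + 2*a*b*(2*a*b)))
          * ((2*a*b*(b^2+a*b) - (b^2+2*a*b-a^2)*(2*a*b))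
              /((b^2+2*a*b-a^2)*(b^2+a*b) + 2*a*b*(2*a*b)) / (y*s))
    = (1 / s) *
        (Omega y (phi2 w (-t)) (phi3 w (-t))
          + Omega y (phi2 w (-t) * phi3 w (-t)) (phi2 w t)
          + Omega y (phi2 w (-t) * phi3 w (-t) * phi2 w t) (phi3 w t)) := by
  set c := Complex.cos (w*t) with hcdef
  set σ := Complex.sin (w*t) with hsdef
  have hc0 : c ≠ 0 := by
    intro h
    rw [h] at hcu
    norm_num at hcu
    exact hv0.ne' (by exact_mod_cast hcu.symm)
  have e1 : (phi2 w (-t)) 0 0 = c := by simp [phi2, hcdef]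
  have e2 : (phi3 w (-t)) 0 0 = c := by simp [phi3, hcdef]
  have e3 : (phi2 w t) 0 0 = c := by simp [phi2, hcdef]
  have e4 : (phi3 w t) 0 0 = c := by simp [phi3, hcdef]
  have hW2 : (phi2 w (-t) * phi3 w (-t)) 0 0 = c^2 + σ^2*I := by
    simp [phi2, phi3, Matrix.mul_apply, Fin.sum_univ_two, Complex.ofReal_neg, mul_neg,
      Complex.cos_neg, Complex.sin_neg]
    field_simp
    ring
  have hW3 : (phi2 w (-t) * phi3 w (-t) * phi2 w t) 0 0
      = c*(c^2 + σ^2 + 2*σ^2*I) := by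
    simp [phi2, phi3, Matrix.mul_apply, Fin.sum_univ_two, Complex.ofReal_neg, mul_neg,
      Complex.cos_neg, Complex.sin_neg]
    field_simp
    ring
  have hW4 : (phi2 w (-t) * phi3 w (-t) * phi2 w t * phi3 w t) 0 0
      = (c^2)^2 + 2*c^2*σ^2 - (σ^2)^2 + 2*c^2*σ^2*I := by
    simp [phi2, phi3, Matrix.mul_apply, Fin.sum_univ_two, Complex.ofReal_neg, mul_neg,
      Complex.cos_neg, Complex.sin_neg]
    field_simp
    linear_combination (σ^4 - c^2*σ^2) * Complex.I_sq
  have ha1 : Complex.arg ((phi2 w (-t) * phi3 w (-t)) 0 0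
      / ((phi2 w (-t)) 0 0 * (phi3 w (-t)) 0 0))
      = Real.arctan ((a*b - b*0)/(b*b + a*0)) := by
    have hr1 : (phi2 w (-t) * phi3 w (-t)) 0 0 / ((phi2 w (-t)) 0 0 * (phi3 w (-t)) 0 0)
        = (((b:ℝ):ℂ) + (a:ℝ)*I) / (((b:ℝ):ℂ) + ((0:ℝ):ℂ)*I) := by
      rw [hW2, e1, e2, ← sq, hcu, hsu]
      push_cast
      ring
    rw [hr1, aux_arg_div b a b 0 (by intro h; nlinarith) (by nlinarith)]
  have ha2 : Complex.arg ((phi2 w (-t) * phi3 w (-t) * phi2 w t) 0 0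
      / ((phi2 w (-t) * phi3 w (-t)) 0 0 * (phi2 w t) 0 0))
      = Real.arctan ((2*a*b - (b+a)*a)/((b+a)*b + 2*a*a)) := by
    have hr2 : (phi2 w (-t) * phi3 w (-t) * phi2 w t) 0 0
        / ((phi2 w (-t) * phi3 w (-t)) 0 0 * (phi2 w t) 0 0)
        = (((b + a : ℝ):ℂ) + ((2*a : ℝ):ℂ)*I) / (((b:ℝ):ℂ) + ((a:ℝ):ℂ)*I) := by
      rw [hW3, hW2, e3, mul_comm c (c^2 + σ^2 + 2*σ^2*I), mul_div_mul_right _ _ hc0,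
        hcu, hsu]
      push_cast
      ring
    rw [hr2, aux_arg_div (b+a) (2*a) b a (by intro h; nlinarith [mul_pos hv0 hv0, sq_nonneg a]) hp2]
  have ha3 : Complex.arg ((phi2 w (-t) * phi3 w (-t) * phi2 w t * phi3 w t) 0 0
      / ((phi2 w (-t) * phi3 w (-t) * phi2 w t) 0 0 * (phi3 w t) 0 0))
      = Real.arctan ((2*a*b*(b^2+a*b) - (b^2+2*a*b-a^2)*(2*a*b))
          /((b^2+2*a*b-a^2)*(b^2+a*b) + 2*a*b*(2*a*b))) := by
    have hden : c*(c^2 + σ^2 + 2*σ^2*I)*c = c^2*(c^2 + σ^2 + 2*σ^2*I) := by ring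
    have hr3 : (phi2 w (-t) * phi3 w (-t) * phi2 w t * phi3 w t) 0 0
        / ((phi2 w (-t) * phi3 w (-t) * phi2 w t) 0 0 * (phi3 w t) 0 0)
        = ((((b^2 + 2*a*b - a^2) : ℝ):ℂ) + ((2*a*b : ℝ):ℂ)*I)
          / ((((b^2 + a*b) : ℝ):ℂ) + ((2*a*b : ℝ):ℂ)*I) := by
      rw [hW4, hW3, e4, hden, hcu, hsu]
      push_cast
      ring
    rw [hr3, aux_arg_div (b^2+2*a*b-a^2) (2*a*b) (b^2+a*b) (2*a*b) hq3.ne' hp3]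
  simp only [Omega, ha1, ha2, ha3]
  rw [← FF_mul ((a*b - b*0)/(b*b + a*0)),
    ← FF_mul ((2*a*b - (b+a)*a)/((b+a)*b + 2*a*a)),
    ← FF_mul ((2*a*b*(b^2+a*b) - (b^2+2*a*b-a^2)*(2*a*b))
      /((b^2+2*a*b-a^2)*(b^2+a*b) + 2*a*b*(2*a*b)))]
  field_simp

/-- `arctan x / x`, extended by `1` at `0`, is continuous at `0`. -/
lemma aux_F_cont : Tendsto FF (nhds 0) (nhds 1) := by
  have h : Tendsto (fun x : ℝ => Real.arctan x / x) (nhdsWithin 0 {0}ᶜ) (nhds 1) := by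
    have h2 := hasDerivAt_iff_tendsto_slope.1 (Real.hasDerivAt_arctan 0)
    simpa [slope_fun_def, Real.arctan_zero, div_eq_inv_mul] using h2
  rw [← nhdsNE_sup_pure (0:ℝ), tendsto_sup]
  constructor
  · refine Tendsto.congr' ?_ h
    filter_upwards [self_mem_nhdsWithin] with x hx
    exact (if_neg hx).symm
  · rw [tendsto_pure_left]
    intro s hs
    simpa [FF] using mem_of_mem_nhds hs

/-- for `y ≠ 0`, `w² = y`, with `W₁ = φ2(−√s)`, `W₂ = W₁ φ3(−√s)`,
`W₃ = W₂ φ2(√s)` and `R(s) = Ω_y(W₁,φ3(−√s)) + Ω_y(W₂,φ2(√s)) + Ω_y(W₃,φ3(√s))`, one has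
`(1/s)·R(s) → 2` as `s → 0⁺`; this shows the central component of `[J2,J3]` is `2J0`. -/
theorem statement16 (y : ℝ) (hy : y ≠ 0) (w : ℂ) (hw : w ^ 2 = (y : ℂ)) :
    Tendsto
      (fun s : ℝ =>
        (1 / s) *
          (Omega y (phi2 w (-Real.sqrt s)) (phi3 w (-Real.sqrt s))
            + Omega y (phi2 w (-Real.sqrt s) * phi3 w (-Real.sqrt s))
                (phi2 w (Real.sqrt s))
            + Omega y (phi2 w (-Real.sqrt s) * phi3 w (-Real.sqrt s)
                * phi2 w (Real.sqrt s)) (phi3 w (Real.sqrt s))))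
      (nhdsWithin 0 (Set.Ioi (0 : ℝ)))
      (nhds 2) := by
  have hw0 : w ≠ 0 := by
    intro h; rw [h] at hw; simp at hw; exact hy (by exact_mod_cast hw.symm)
  have hconj : (starRingEnd ℂ) w = w ∨ (starRingEnd ℂ) w = -w := by
    have h2 : ((starRingEnd ℂ) w)^2 = w^2 := by
      rw [← map_pow, hw, Complex.conj_ofReal]
    exact sq_eq_sq_iff_eq_or_eq_neg.1 h2
  have hsinreal : ∀ x : ℝ, (((Complex.sin (w * x))^2).re : ℂ) = (Complex.sin (w * x))^2 := by
    intro x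
    rw [← Complex.conj_eq_iff_re, map_pow, ← Complex.sin_conj, _root_.map_mul,
      Complex.conj_ofReal]
    rcases hconj with h | h <;> rw [h] <;> simp [Complex.sin_neg]
  have hcosreal : ∀ x : ℝ, (((Complex.cos (w * x))^2).re : ℂ) = (Complex.cos (w * x))^2 := by
    intro x
    rw [← Complex.conj_eq_iff_re, map_pow, ← Complex.cos_conj, _root_.map_mul,
      Complex.conj_ofReal]
    rcases hconj with h | h <;> rw [h] <;> simp [Complex.cos_neg]
  set u : ℝ → ℝ := fun s => ((Complex.sin (w * (Real.sqrt s : ℝ)))^2).re with hudef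
  set v : ℝ → ℝ := fun s => ((Complex.cos (w * (Real.sqrt s : ℝ)))^2).re with hvdef
  set l : Filter ℝ := nhdsWithin 0 (Set.Ioi (0 : ℝ)) with hldef
  have hu0 : Tendsto u l (nhds 0) := by
    have hcont : Continuous u := by
      apply Complex.continuous_re.comp
      exact (Complex.continuous_sin.comp (continuous_const.mul
        (Complex.continuous_ofReal.comp Real.continuous_sqrt))).pow 2
    have h := (hcont.tendsto 0).mono_left (nhdsWithin_le_nhds (s := Set.Ioi (0:ℝ)))
    simpa [hudef] using h
  have hv1 : Tendsto v l (nhds 1) := by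
    have hcont : Continuous v := by
      apply Complex.continuous_re.comp
      exact (Complex.continuous_cos.comp (continuous_const.mul
        (Complex.continuous_ofReal.comp Real.continuous_sqrt))).pow 2
    have h := (hcont.tendsto 0).mono_left (nhdsWithin_le_nhds (s := Set.Ioi (0:ℝ)))
    simpa [hvdef] using h
  have huy : Tendsto (fun s => u s / (y * s)) l (nhds 1) := by
    have hz : Tendsto (fun s : ℝ => w * (Real.sqrt s : ℝ)) l (nhdsWithin 0 {(0:ℂ)}ᶜ) := by
      rw [tendsto_nhdsWithin_iff]
      constructor
      · have hcont : Continuous (fun s : ℝ => w * (Real.sqrt s : ℝ)) :=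
          continuous_const.mul (Complex.continuous_ofReal.comp Real.continuous_sqrt)
        simpa using (hcont.tendsto 0).mono_left (nhdsWithin_le_nhds (s := Set.Ioi (0:ℝ)))
      · filter_upwards [self_mem_nhdsWithin] with s hs
        simp only [Set.mem_compl_iff, Set.mem_singleton_iff]
        exact mul_ne_zero hw0 (by exact_mod_cast Real.sqrt_ne_zero'.2 hs)
    have hsin : Tendsto (fun z : ℂ => Complex.sin z / z) (nhdsWithin 0 {(0:ℂ)}ᶜ) (nhds 1) := by
      have h2 := hasDerivAt_iff_tendsto_slope.1 (Complex.hasDerivAt_sin 0)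
      simp only [Complex.cos_zero] at h2
      refine Tendsto.congr' ?_ h2
      filter_upwards [self_mem_nhdsWithin] with z _
      simp [slope_fun_def, Complex.sin_zero, div_eq_inv_mul]
    have hcomp : Tendsto
        (fun s : ℝ => ((Complex.sin (w * (Real.sqrt s : ℝ)) / (w * (Real.sqrt s : ℝ)))^2).re)
        l (nhds 1) := by
      have h1 := ((hsin.comp hz).pow 2)
      have h2 := (Complex.continuous_re.tendsto (1^2 : ℂ)).comp h1
      simpa [Function.comp_def] using h2
    refine Tendsto.congr' ?_ hcomp
    filter_upwards [self_mem_nhdsWithin] with s hs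
    have hs0 : (0:ℝ) < s := hs
    have hsq : ((w * (Real.sqrt s : ℝ)))^2 = ((y * s : ℝ) : ℂ) := by
      rw [mul_pow, hw, ← Complex.ofReal_pow, Real.sq_sqrt hs0.le]
      push_cast; ring
    rw [div_pow, hsq, Complex.div_ofReal_re]
  set g1 : ℝ → ℝ := fun s => (u s * v s - v s * 0) / (v s * v s + u s * 0) with hg1def
  set g2 : ℝ → ℝ := fun s => (2*u s*v s - (v s + u s)*u s) / ((v s + u s)*v s + 2*u s*(u s))
    with hg2def
  set g3 : ℝ → ℝ := fun s =>
      (2*u s*v s*(v s^2 + u s*v s) - (v s^2 + 2*u s*v s - u s^2)*(2*u s*v s))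
        / ((v s^2 + 2*u s*v s - u s^2)*(v s^2 + u s*v s) + 2*u s*v s*(2*u s*v s)) with hg3def
  have hvpos : ∀ᶠ s in l, 0 < v s := hv1.eventually (eventually_gt_nhds one_pos)
  have hP2 : Tendsto (fun s => (v s + u s)*v s + 2*u s*(u s)) l (nhds 1) := by
    have h := ((hv1.add hu0).mul hv1).add ((hu0.const_mul 2).mul hu0)
    convert h using 2
    norm_num
  have hP2pos : ∀ᶠ s in l, 0 < (v s + u s)*v s + 2*u s*(u s) :=
    hP2.eventually (eventually_gt_nhds one_pos)
  have hQ3 : Tendsto (fun s => (v s^2 + u s*v s)^2 + (2*u s*v s)^2) l (nhds 1) := by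
    have h := (((hv1.pow 2).add (hu0.mul hv1)).pow 2).add (((hu0.const_mul 2).mul hv1).pow 2)
    convert h using 2
    norm_num
  have hQ3pos : ∀ᶠ s in l, 0 < (v s^2 + u s*v s)^2 + (2*u s*v s)^2 :=
    hQ3.eventually (eventually_gt_nhds one_pos)
  have hP3 : Tendsto
      (fun s => (v s^2 + 2*u s*v s - u s^2)*(v s^2 + u s*v s) + 2*u s*v s*(2*u s*v s)) l
      (nhds 1) := by
    have h := ((((hv1.pow 2).add ((hu0.const_mul 2).mul hv1)).sub (hu0.pow 2)).mul
      ((hv1.pow 2).add (hu0.mul hv1))).add (((hu0.const_mul 2).mul hv1).mul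
        ((hu0.const_mul 2).mul hv1))
    convert h using 2
    norm_num
  have hP3pos : ∀ᶠ s in l, 0 <
      (v s^2 + 2*u s*v s - u s^2)*(v s^2 + u s*v s) + 2*u s*v s*(2*u s*v s) :=
    hP3.eventually (eventually_gt_nhds one_pos)
  have hg10 : Tendsto g1 l (nhds 0) := by
    have h := ((hu0.mul hv1).sub (hv1.mul (tendsto_const_nhds (x := (0:ℝ))))).div
      ((hv1.mul hv1).add (hu0.mul (tendsto_const_nhds (x := (0:ℝ))))) (by norm_num)
    convert h using 2
    all_goals norm_num
    funext s; simp [hg1def]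
  have hg20 : Tendsto g2 l (nhds 0) := by
    have h := (((hu0.const_mul 2).mul hv1).sub ((hv1.add hu0).mul hu0)).div hP2 one_ne_zero
    convert h using 2
    all_goals norm_num
    rfl
  have hg30 : Tendsto g3 l (nhds 0) := by
    have hnum : Tendsto
        (fun s => 2*u s*v s*(v s^2 + u s*v s) - (v s^2 + 2*u s*v s - u s^2)*(2*u s*v s)) l
        (nhds 0) := by
      have h := (((hu0.const_mul 2).mul hv1).mul ((hv1.pow 2).add (hu0.mul hv1))).sub
        ((((hv1.pow 2).add ((hu0.const_mul 2).mul hv1)).sub (hu0.pow 2)).mul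
          ((hu0.const_mul 2).mul hv1))
      convert h using 2
      all_goals norm_num
    have h := hnum.div hP3 one_ne_zero
    convert h using 2
    all_goals norm_num
    rfl
  have hL1 : Tendsto (fun s => g1 s / (y * s)) l (nhds 1) := by
    have heq : ∀ s, g1 s / (y * s) = (u s / (y * s)) * (v s / (v s * v s)) := by
      intro s; simp only [hg1def]; ring
    rw [funext heq]
    have h := huy.mul (hv1.div (hv1.mul hv1) (by norm_num))
    convert h using 2
    all_goals norm_num
  have hL2 : Tendsto (fun s => g2 s / (y * s)) l (nhds 1) := by
    have heq : ∀ s, g2 s / (y * s) =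
        (u s / (y * s)) * ((2*v s - (v s + u s)) / ((v s + u s)*v s + 2*u s*(u s))) := by
      intro s; simp only [hg2def]; ring
    rw [funext heq]
    have h := huy.mul (((hv1.const_mul 2).sub (hv1.add hu0)).div hP2 one_ne_zero)
    convert h using 2
    all_goals norm_num
  have hL3 : Tendsto (fun s => g3 s / (y * s)) l (nhds 0) := by
    have heq : ∀ s, g3 s / (y * s) =
        (u s / (y * s)) * ((2*v s*(v s^2 + u s*v s) - (v s^2 + 2*u s*v s - u s^2)*(2*v s))
          / ((v s^2 + 2*u s*v s - u s^2)*(v s^2 + u s*v s) + 2*u s*v s*(2*u s*v s))) := by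
      intro s; simp only [hg3def]; ring
    rw [funext heq]
    have hnum : Tendsto
        (fun s => 2*v s*(v s^2 + u s*v s) - (v s^2 + 2*u s*v s - u s^2)*(2*v s)) l (nhds 0) := by
      have h := (((hv1.const_mul 2).mul ((hv1.pow 2).add (hu0.mul hv1)))).sub
        ((((hv1.pow 2).add ((hu0.const_mul 2).mul hv1)).sub (hu0.pow 2)).mul (hv1.const_mul 2))
      convert h using 2
      all_goals norm_num
    have h := huy.mul (hnum.div hP3 one_ne_zero)
    convert h using 2
    all_goals norm_num
  have hF1 : Tendsto (fun s => FF (g1 s)) l (nhds 1) := aux_F_cont.comp hg10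
  have hF2 : Tendsto (fun s => FF (g2 s)) l (nhds 1) := aux_F_cont.comp hg20
  have hF3 : Tendsto (fun s => FF (g3 s)) l (nhds 1) := aux_F_cont.comp hg30
  have hmain : Tendsto (fun s => FF (g1 s) * (g1 s / (y * s)) + FF (g2 s) * (g2 s / (y * s))
      + FF (g3 s) * (g3 s / (y * s))) l (nhds 2) := by
    have h := ((hF1.mul hL1).add (hF2.mul hL2)).add (hF3.mul hL3)
    convert h using 2
    all_goals norm_num
  refine Tendsto.congr' ?_ hmain
  filter_upwards [self_mem_nhdsWithin, hvpos, hP2pos, hP3pos, hQ3pos]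
    with s hs hv0 hp2 hp3 hq3
  have hs0 : (0:ℝ) < s := hs
  simp only [hg1def, hg2def, hg3def]
  exact aux_main y s hy hs0.ne' w hw0 (Real.sqrt s) (u s) (v s)
    (hcosreal (Real.sqrt s)).symm (hsinreal (Real.sqrt s)).symm hv0 hp2 hp3 hq3
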